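/- There exists an absolute constant C > 0 with the following property: for all integers w ≥ 1 and d ≥ 2 and every tuple a = (a_0,…,a_{w+1}) ∈ A'_{d,w}, setting d_i = d / gcd(d, ã_i) where ã_i ∈ {0,…,d−1} is the representative of a_i, there exist two distinct indices i ≠ j with d_i ≥ C·log d and d_j ≥ C·log d. -/

import Mathlib

open scoped BigOperators

/-- There is an absolute constant `C > 0` such that for all `w ≥ 1`,
`d ≥ 2` and every tuple `a ∈ A'_{d,w}` (entries nonzero, summing to zero, with
`gcd(d, a_0, …, a_{w+1}) = 1`), at least two of the quantities `d_i = d/gcd(d, a_i)`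
are `≥ C·log d`. -/
-- prime power divides binary lcm
lemma aux_pow_dvd_lcm {p k x y : ℕ} (hp : p.Prime) (hx : x ≠ 0) (hy : y ≠ 0)
    (h : p ^ k ∣ Nat.lcm x y) : p ^ k ∣ x ∨ p ^ k ∣ y := by
  have hl : Nat.lcm x y ≠ 0 := Nat.lcm_ne_zero hx hy
  rw [hp.pow_dvd_iff_le_factorization hl, Nat.factorization_lcm hx hy,
    Finsupp.sup_apply, le_sup_iff] at h
  rcases h with h | h
  · exact Or.inl ((hp.pow_dvd_iff_le_factorization hx).2 h)
  · exact Or.inr ((hp.pow_dvd_iff_le_factorization hy).2 h)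

lemma aux_pow_dvd_finset_lcm {ι : Type*} [DecidableEq ι] {p k : ℕ} (hp : p.Prime) (s : Finset ι) (f : ι → ℕ)
    (hs : s.Nonempty) (hf : ∀ i ∈ s, f i ≠ 0) (h : p ^ k ∣ s.lcm f) :
    ∃ i ∈ s, p ^ k ∣ f i := by
  induction s using Finset.induction_on with
  | empty => exact absurd hs (by simp)
  | @insert a s ha ih =>
    rw [Finset.lcm_insert] at h
    rcases s.eq_empty_or_nonempty with rfl | hs'
    · simp only [Finset.lcm_empty, lcm_eq_nat_lcm, Nat.lcm_one_right] at h
      exact ⟨a, Finset.mem_insert_self a _, h⟩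
    · have hslcm : s.lcm f ≠ 0 := by
        simp only [ne_eq, Finset.lcm_eq_zero_iff, Set.mem_image]
        rintro ⟨i, hi, hi0⟩
        exact hf i (Finset.mem_insert_of_mem hi) hi0
      rw [lcm_eq_nat_lcm] at h
      rcases aux_pow_dvd_lcm hp (hf a (Finset.mem_insert_self a _)) hslcm h with h | h
      · exact ⟨a, Finset.mem_insert_self a _, h⟩
      · obtain ⟨i, hi, hdi⟩ := ih hs' (fun i hi => hf i (Finset.mem_insert_of_mem hi)) h
        exact ⟨i, Finset.mem_insert_of_mem hi, hdi⟩

lemma aux_numeric {d T : ℕ} (hd : 2 ≤ d)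
    (h : ∀ p ∈ d.primeFactors, p ^ d.factorization p ≤ T) : d ≤ 16 ^ T := by
  have hd0 : d ≠ 0 := by omega
  have hT : 1 ≤ T := by
    by_contra hT
    have hF : d.primeFactors ≠ ∅ := by
      simp [Nat.primeFactors_eq_empty]; omega
    obtain ⟨p, hp⟩ := Finset.nonempty_iff_ne_empty.2 hF
    have h1 := h p hp
    have h2 : 0 < p ^ d.factorization p :=
      Nat.pow_pos (Nat.pos_of_mem_primeFactors hp)
    omega
  have hdprod : d = ∏ p ∈ d.primeFactors, p ^ d.factorization p := by
    conv_lhs => rw [← Nat.factorization_prod_pow_eq_self hd0]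
    exact Nat.prod_factorization_eq_prod_primeFactors _
  set ν : ℕ → ℕ := fun p => d.factorization p with hν
  have hsplit := Finset.prod_filter_mul_prod_filter_not d.primeFactors
    (fun p => ν p = 1) (fun p => p ^ ν p)
  set P1 := d.primeFactors.filter (fun p => ν p = 1) with hP1
  set P2 := d.primeFactors.filter (fun p => ¬ ν p = 1) with hP2
  have hA : ∏ p ∈ P1, p ^ ν p ≤ 4 ^ T := by
    have e1 : ∏ p ∈ P1, p ^ ν p = ∏ p ∈ P1, p := by
      apply Finset.prod_congr rfl
      intro p hp
      rw [(Finset.mem_filter.1 hp).2, pow_one]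
    have sub1 : P1 ⊆ (Finset.range (T + 1)).filter Nat.Prime := by
      intro p hp
      obtain ⟨hpF, hp1⟩ := Finset.mem_filter.1 hp
      have hprime := Nat.prime_of_mem_primeFactors hpF
      have : p ^ ν p ≤ T := h p hpF
      rw [hp1, pow_one] at this
      exact Finset.mem_filter.2 ⟨Finset.mem_range.2 (by omega), hprime⟩
    calc ∏ p ∈ P1, p ^ ν p = ∏ p ∈ P1, p := e1
      _ ≤ ∏ p ∈ (Finset.range (T + 1)).filter Nat.Prime, p := by
          apply Finset.prod_le_prod_of_subset_of_one_le' sub1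
          intro i hi _
          exact (Finset.mem_filter.1 hi).2.one_lt.le
      _ = primorial T := rfl
      _ ≤ 4 ^ T := primorial_le_4_pow T
  have hB : ∏ p ∈ P2, p ^ ν p ≤ 4 ^ T := by
    have hcard : P2.card ≤ Nat.sqrt T := by
      have sub2 : P2 ⊆ Finset.Ico 2 (Nat.sqrt T + 1) := by
        intro p hp
        obtain ⟨hpF, hp1⟩ := Finset.mem_filter.1 hp
        have hprime := Nat.prime_of_mem_primeFactors hpF
        have hν1 : 0 < ν p :=
          hprime.factorization_pos_of_dvd hd0 (Nat.dvd_of_mem_primeFactors hpF)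
        have hν2 : 2 ≤ ν p := by omega
        have hpT : p * p ≤ T := by
          calc p * p = p ^ 2 := (sq p).symm
            _ ≤ p ^ ν p := Nat.pow_le_pow_right hprime.pos hν2
            _ ≤ T := h p hpF
        exact Finset.mem_Ico.2 ⟨hprime.two_le, Nat.lt_succ_of_le (Nat.le_sqrt.2 hpT)⟩
      calc P2.card ≤ (Finset.Ico 2 (Nat.sqrt T + 1)).card := Finset.card_le_card sub2
        _ = Nat.sqrt T + 1 - 2 := Nat.card_Ico _ _
        _ ≤ Nat.sqrt T := by omega
    have hTpow : T ≤ 4 ^ Nat.sqrt T := by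
      have h1 : T < (Nat.sqrt T + 1) * (Nat.sqrt T + 1) := Nat.lt_succ_sqrt T
      have h2 : Nat.sqrt T + 1 ≤ 2 ^ Nat.sqrt T := Nat.lt_two_pow_self
      have h3 : (2 ^ Nat.sqrt T) * (2 ^ Nat.sqrt T) = 4 ^ Nat.sqrt T := by
        rw [← Nat.pow_add, show (4 : ℕ) = 2 ^ 2 by norm_num, ← Nat.pow_mul]
        ring_nf
      calc T ≤ (Nat.sqrt T + 1) * (Nat.sqrt T + 1) := h1.le
        _ ≤ (2 ^ Nat.sqrt T) * (2 ^ Nat.sqrt T) := Nat.mul_le_mul h2 h2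
        _ = 4 ^ Nat.sqrt T := h3
    calc ∏ p ∈ P2, p ^ ν p ≤ T ^ P2.card :=
          Finset.prod_le_pow_card _ _ _ (fun p hp => h p (Finset.mem_filter.1 hp).1)
      _ ≤ T ^ Nat.sqrt T := Nat.pow_le_pow_right hT hcard
      _ ≤ (4 ^ Nat.sqrt T) ^ Nat.sqrt T := Nat.pow_le_pow_left hTpow _
      _ = 4 ^ (Nat.sqrt T * Nat.sqrt T) := by rw [← pow_mul]
      _ ≤ 4 ^ T := Nat.pow_le_pow_right (by norm_num) (Nat.sqrt_le T)
  calc d = (∏ p ∈ P1, p ^ ν p) * ∏ p ∈ P2, p ^ ν p := by rw [hdprod, ← hsplit]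
    _ ≤ 4 ^ T * 4 ^ T := Nat.mul_le_mul hA hB
    _ = 16 ^ T := by rw [← mul_pow]; norm_num


theorem two_large_orders_in_Adw :
    ∃ C : ℝ, 0 < C ∧ ∀ w d : ℕ, 1 ≤ w → 2 ≤ d → ∀ a : Fin (w + 2) → ZMod d,
      (∀ i, a i ≠ 0) → (∑ i, a i = 0) →
      Nat.gcd d (Finset.univ.gcd fun i => (a i).val) = 1 →
      ∃ i j : Fin (w + 2), i ≠ j ∧
        C * Real.log d ≤ ((d / Nat.gcd d (a i).val : ℕ) : ℝ) ∧
        C * Real.log d ≤ ((d / Nat.gcd d (a j).val : ℕ) : ℝ) := by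
  refine ⟨1/6, by norm_num, ?_⟩
  intro w d hw hd a ha hsum hgcd
  by_contra hcon
  push_neg at hcon
  haveI : NeZero d := ⟨by omega⟩
  have hd0 : d ≠ 0 := by omega
  set C : ℝ := 1/6 with hC
  let D : Fin (w+2) → ℕ := fun i => d / Nat.gcd d (a i).val
  have hgpos : ∀ i, 0 < Nat.gcd d (a i).val :=
    fun i => Nat.gcd_pos_of_pos_left _ (by omega)
  have hgdvd : ∀ i, Nat.gcd d (a i).val ∣ d := fun i => Nat.gcd_dvd_left _ _
  have hDpos : ∀ i, 0 < D i :=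
    fun i => Nat.div_pos (Nat.le_of_dvd (by omega) (Nat.gcd_dvd_left _ _)) (hgpos i)
  have hord : ∀ i, addOrderOf (a i) = D i := by
    intro i
    have h1 : (((a i).val : ℕ) : ZMod d) = a i := ZMod.natCast_rightInverse (a i)
    rw [← h1, ZMod.addOrderOf_coe _ hd0]
  have hlogpos : 0 < Real.log d := Real.log_pos (by exact_mod_cast (by omega : 1 < d))
  have keyA : ∀ p : ℕ, p.Prime → p ∣ d → ∃ i, p ^ d.factorization p ∣ D i := by
    intro p hp hpd
    have hex : ∃ i, ¬ p ∣ Nat.gcd d (a i).val := by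
      by_contra hall
      push_neg at hall
      have h1 : p ∣ Finset.univ.gcd (fun i => (a i).val) :=
        Finset.dvd_gcd (fun i _ => (hall i).trans (Nat.gcd_dvd_right _ _))
      have h2 : p ∣ Nat.gcd d (Finset.univ.gcd fun i => (a i).val) := Nat.dvd_gcd hpd h1
      rw [hgcd, Nat.dvd_one] at h2
      exact hp.one_lt.ne' h2
    obtain ⟨i, hi⟩ := hex
    refine ⟨i, ?_⟩
    have hcop : Nat.Coprime (p ^ d.factorization p) (Nat.gcd d (a i).val) :=
      Nat.Coprime.pow_left _ ((hp.coprime_iff_not_dvd).2 hi)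
    have hdd : d = D i * Nat.gcd d (a i).val := (Nat.div_mul_cancel (hgdvd i)).symm
    exact hcop.dvd_of_dvd_mul_right (hdd ▸ Nat.ordProj_dvd d p)
  set T : ℕ := Nat.floor (C * Real.log d) with hT
  have keyB : ∀ p ∈ d.primeFactors, p ^ d.factorization p ≤ T := by
    intro p hpF
    have hp := Nat.prime_of_mem_primeFactors hpF
    have hpd := Nat.dvd_of_mem_primeFactors hpF
    obtain ⟨j, hjsmall, hjd⟩ :
        ∃ j, ¬ (C * Real.log d ≤ (D j : ℝ)) ∧ p ^ d.factorization p ∣ D j := by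
      obtain ⟨i, hi⟩ := keyA p hp hpd
      by_cases hbig : C * Real.log d ≤ (D i : ℝ)
      · have hsmall : ∀ j, j ≠ i → ¬ (C * Real.log d ≤ (D j : ℝ)) :=
          fun j hj => not_le.2 (hcon i j hj.symm hbig)
        have hDi : D i ∣ (Finset.univ.erase i).lcm D := by
          rw [← hord i, addOrderOf_dvd_iff_nsmul_eq_zero]
          have hsum' : a i = - ∑ j ∈ Finset.univ.erase i, a j := by
            have := Finset.sum_erase_add Finset.univ a (Finset.mem_univ i)
            rw [hsum] at this
            exact eq_neg_of_add_eq_zero_right this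
          rw [hsum', smul_neg, Finset.smul_sum, neg_eq_zero]
          refine Finset.sum_eq_zero (fun j hj => ?_)
          have : addOrderOf (a j) ∣ (Finset.univ.erase i).lcm D := by
            rw [hord j]; exact Finset.dvd_lcm hj
          exact addOrderOf_dvd_iff_nsmul_eq_zero.1 this
        have hne : (Finset.univ.erase i).Nonempty := by
          rw [← Finset.card_pos, Finset.card_erase_of_mem (Finset.mem_univ i),
            Finset.card_univ, Fintype.card_fin]
          omega
        obtain ⟨j, hj, hjd⟩ := aux_pow_dvd_finset_lcm hp _ D hne
          (fun j _ => (hDpos j).ne') (hi.trans hDi)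
        exact ⟨j, hsmall j (Finset.mem_erase.1 hj).1, hjd⟩
      · exact ⟨i, hbig, hi⟩
    have h1 : p ^ d.factorization p ≤ D j := Nat.le_of_dvd (hDpos j) hjd
    have h2 : ((p ^ d.factorization p : ℕ) : ℝ) ≤ C * Real.log d :=
      le_trans (by exact_mod_cast h1) (le_of_lt (not_le.1 hjsmall))
    exact Nat.le_floor h2
  have hbound := aux_numeric hd keyB
  have h16 : Real.log 16 ≤ 3 := by
    rw [Real.log_le_iff_le_exp (by norm_num)]
    have hexp := Real.exp_one_gt_d9
    have h3 : Real.exp 3 = Real.exp 1 ^ 3 := by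
      rw [← Real.exp_nat_mul]; norm_num
    have h4 : (2.7182818283 : ℝ) ^ 3 ≤ Real.exp 1 ^ 3 :=
      pow_le_pow_left₀ (by norm_num) hexp.le 3
    rw [h3]
    nlinarith [h4]
  have hc1 : (d : ℝ) ≤ (16 : ℝ) ^ T := by exact_mod_cast hbound
  have hc2 : Real.log d ≤ (T : ℝ) * Real.log 16 := by
    calc Real.log d ≤ Real.log ((16:ℝ) ^ T) :=
          Real.log_le_log (by positivity) hc1
      _ = (T : ℝ) * Real.log 16 := by rw [Real.log_pow]
  have hc3 : (T : ℝ) ≤ C * Real.log d := Nat.floor_le (by positivity)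
  have hTnn : (0:ℝ) ≤ (T:ℝ) := Nat.cast_nonneg T
  rw [hC] at hc3
  nlinarith [hc2, hc3, h16, hlogpos, hTnn]
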